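/- Let F be a class of functions f : X → ℝ on a finite sample x_1,…,x_m, let σ : ℝ → ℝ be L-Lipschitz with σ(0) = 0, and define the empirical Rademacher complexity R̂(F) = E_ε[(1/m) sup_{f ∈ F} |∑_{j=1}^m ε_j f(x_j)|]. Then R̂(σ ∘ F) ≤ 2L · R̂(F), where σ ∘ F = {σ ∘ f : f ∈ F}. -/

import Mathlib

/-- A sign vector built from a Boolean choice: the canonical model of a tuple of
independent Rademacher variables. -/
def signVec (m : ℕ) (s : Fin m → Bool) : Fin m → ℝ :=
  fun i => if s i then 1 else -1

/-- Expectation over `m` i.i.d. Rademacher variables (uniform average over all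
`2^m` sign patterns). -/
noncomputable def radE (m : ℕ) (F : (Fin m → ℝ) → ℝ) : ℝ :=
  (∑ s : Fin m → Bool, F (signVec m s)) / 2 ^ m

open Finset

lemma absSigma {σ : ℝ → ℝ} {L : ℝ} (hlip : ∀ a b : ℝ, |σ a - σ b| ≤ L * |a - b|)
    (h0 : σ 0 = 0) (t : ℝ) : |σ t| ≤ L * |t| := by
  simpa [h0] using hlip t 0

lemma abs_signVec (m : ℕ) (s : Fin m → Bool) (j : Fin m) : |signVec m s j| = 1 := by
  rcases Bool.eq_false_or_eq_true (s j) with h | h <;> simp [signVec, h]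

lemma key_step {ι : Type*} [Nonempty ι] (G a : ι → ℝ) (σ : ℝ → ℝ) (L : ℝ)
    (hL : 0 ≤ L) (hlip : ∀ a b : ℝ, |σ a - σ b| ≤ L * |a - b|) (h0 : σ 0 = 0)
    (C : ℝ) (hC : ∀ i, |G i| + L * |a i| ≤ C) :
    (⨆ i, (G i + σ (a i))) + (⨆ i, (G i - σ (a i))) ≤
    (⨆ i, (G i + L * a i)) + (⨆ i, (G i - L * a i)) := by
  have habs : ∀ i, |σ (a i)| ≤ L * |a i| := fun i => absSigma hlip h0 (a i)
  have hLa : ∀ i, |L * a i| ≤ L * |a i| := fun i => by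
    rw [abs_mul, abs_of_nonneg hL]
  have b1 : BddAbove (Set.range fun i => G i + L * a i) :=
    ⟨C, by rintro _ ⟨i, rfl⟩
           have h1 := (abs_le.1 (hLa i)).2
           have h2 := le_abs_self (G i)
           show G i + L * a i ≤ C
           linarith [hC i]⟩
  have b2 : BddAbove (Set.range fun i => G i - L * a i) :=
    ⟨C, by rintro _ ⟨i, rfl⟩
           have h1 := (abs_le.1 (hLa i)).1
           have h2 := le_abs_self (G i)
           show G i - L * a i ≤ C
           linarith [hC i]⟩
  have pair : ∀ i1 i2, (G i1 + σ (a i1)) + (G i2 - σ (a i2)) ≤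
      (⨆ i, G i + L * a i) + (⨆ i, G i - L * a i) := by
    intro i1 i2
    have hl := (abs_le.1 (hlip (a i1) (a i2))).2
    have h1 : G i1 + L * a i1 ≤ ⨆ i, G i + L * a i := le_ciSup b1 i1
    have h2 : G i2 - L * a i2 ≤ ⨆ i, G i - L * a i := le_ciSup b2 i2
    have h1' : G i1 - L * a i1 ≤ ⨆ i, G i - L * a i := le_ciSup b2 i1
    have h2' : G i2 + L * a i2 ≤ ⨆ i, G i + L * a i := le_ciSup b1 i2
    rcases le_total (a i2) (a i1) with h | h
    · rw [abs_of_nonneg (by linarith)] at hl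
      nlinarith
    · rw [abs_of_nonpos (by linarith)] at hl
      nlinarith
  have s2 : ∀ i1, (⨆ i2, G i2 - σ (a i2)) ≤
      ((⨆ i, G i + L * a i) + (⨆ i, G i - L * a i)) - (G i1 + σ (a i1)) :=
    fun i1 => ciSup_le fun i2 => by linarith [pair i1 i2]
  have s1 : (⨆ i1, G i1 + σ (a i1)) ≤
      ((⨆ i, G i + L * a i) + (⨆ i, G i - L * a i)) - (⨆ i2, G i2 - σ (a i2)) :=
    ciSup_le fun i1 => by linarith [s2 i1]
  linarith

lemma talagrand {κ : Type*} [Nonempty κ] {m : ℕ} (A : κ → Fin m → ℝ)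
    (σ : ℝ → ℝ) (L : ℝ) (hL : 0 ≤ L)
    (hlip : ∀ a b : ℝ, |σ a - σ b| ≤ L * |a - b|) (h0 : σ 0 = 0)
    (D : ℝ) (hD : ∀ i, ∑ j, |A i j| ≤ D) :
    ∑ s : Fin m → Bool, ⨆ i, ∑ j, signVec m s j * σ (A i j) ≤
      ∑ s : Fin m → Bool, ⨆ i, ∑ j, signVec m s j * (L * A i j) := by
  classical
  set ψ : Finset (Fin m) → Fin m → ℝ → ℝ :=
    fun T j t => if j ∈ T then L * t else σ t with hψ
  set S : Finset (Fin m) → ℝ :=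
    fun T => ∑ s : Fin m → Bool, ⨆ i, ∑ j, signVec m s j * ψ T j (A i j) with hS
  have hψbound : ∀ T j t, |ψ T j t| ≤ L * |t| := by
    intro T j t
    by_cases h : j ∈ T
    · simp [hψ, h, abs_mul, abs_of_nonneg hL]
    · simpa [hψ, h] using absSigma hlip h0 t
  have step : ∀ (T : Finset (Fin m)) (k : Fin m), k ∉ T → S T ≤ S (insert k T) := by
    intro T k hk
    set e := Equiv.piSplitAt k (fun _ : Fin m => Bool) with he
    have hsym : ∀ (b : Bool) (t : {j : Fin m // j ≠ k} → Bool) (j : Fin m) (h : j ≠ k),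
        e.symm (b, t) j = t ⟨j, h⟩ := by
      intro b t j h
      simp [he, Equiv.piSplitAt_symm_apply, h]
    have hsymk : ∀ (b : Bool) (t : {j : Fin m // j ≠ k} → Bool), e.symm (b, t) k = b := by
      intro b t
      simp [he, Equiv.piSplitAt_symm_apply]
    have expand : ∀ T' : Finset (Fin m), S T' =
        ∑ t : {j : Fin m // j ≠ k} → Bool,
          ((⨆ i, ∑ j, signVec m (e.symm (true, t)) j * ψ T' j (A i j)) +
           (⨆ i, ∑ j, signVec m (e.symm (false, t)) j * ψ T' j (A i j))) := by
      intro T'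
      simp only [hS]
      rw [← Equiv.sum_comp e.symm
        (fun s => ⨆ i, ∑ j, signVec m s j * ψ T' j (A i j))]
      rw [Fintype.sum_prod_type, Fintype.sum_bool, ← Finset.sum_add_distrib]
    rw [expand T, expand (insert k T)]
    apply Finset.sum_le_sum
    intro t _
    -- fixed rest pattern t : pair the two signs at coordinate k
    set G : κ → ℝ :=
      fun i => ∑ j ∈ Finset.univ.erase k, signVec m (e.symm (true, t)) j * ψ T j (A i j)
      with hG
    have signeq : ∀ (j : Fin m), j ≠ k →
        signVec m (e.symm (false, t)) j = signVec m (e.symm (true, t)) j := by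
      intro j h
      simp [signVec, hsym true t j h, hsym false t j h]
    have psieq : ∀ (j : Fin m), j ≠ k → ψ (insert k T) j = ψ T j := by
      intro j h
      funext u
      simp [hψ, Finset.mem_insert, h]
    have c1 : ∀ i, ∑ j, signVec m (e.symm (true, t)) j * ψ T j (A i j) = G i + σ (A i k) := by
      intro i
      rw [← Finset.sum_erase_add _ _ (Finset.mem_univ k), hG]
      congr 1
      simp [signVec, hsymk, hψ, hk]
    have c2 : ∀ i, ∑ j, signVec m (e.symm (false, t)) j * ψ T j (A i j) = G i - σ (A i k) := by
      intro i
      rw [← Finset.sum_erase_add _ _ (Finset.mem_univ k), hG]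
      have : ∑ j ∈ Finset.univ.erase k, signVec m (e.symm (false, t)) j * ψ T j (A i j)
          = ∑ j ∈ Finset.univ.erase k, signVec m (e.symm (true, t)) j * ψ T j (A i j) :=
        Finset.sum_congr rfl fun j hj => by rw [signeq j (Finset.ne_of_mem_erase hj)]
      rw [this]
      have : signVec m (e.symm (false, t)) k * ψ T k (A i k) = -σ (A i k) := by
        simp [signVec, hsymk, hψ, hk]
      rw [this]
      ring
    have c3 : ∀ i, ∑ j, signVec m (e.symm (true, t)) j * ψ (insert k T) j (A i j)
        = G i + L * A i k := by
      intro i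
      rw [← Finset.sum_erase_add _ _ (Finset.mem_univ k), hG]
      have : ∑ j ∈ Finset.univ.erase k, signVec m (e.symm (true, t)) j * ψ (insert k T) j (A i j)
          = ∑ j ∈ Finset.univ.erase k, signVec m (e.symm (true, t)) j * ψ T j (A i j) :=
        Finset.sum_congr rfl fun j hj => by rw [psieq j (Finset.ne_of_mem_erase hj)]
      rw [this]
      have : signVec m (e.symm (true, t)) k * ψ (insert k T) k (A i k) = L * A i k := by
        simp [signVec, hsymk, hψ]
      rw [this]
    have c4 : ∀ i, ∑ j, signVec m (e.symm (false, t)) j * ψ (insert k T) j (A i j)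
        = G i - L * A i k := by
      intro i
      rw [← Finset.sum_erase_add _ _ (Finset.mem_univ k), hG]
      have h1 : ∑ j ∈ Finset.univ.erase k, signVec m (e.symm (false, t)) j * ψ (insert k T) j (A i j)
          = ∑ j ∈ Finset.univ.erase k, signVec m (e.symm (true, t)) j * ψ T j (A i j) :=
        Finset.sum_congr rfl fun j hj => by
          rw [psieq j (Finset.ne_of_mem_erase hj), signeq j (Finset.ne_of_mem_erase hj)]
      rw [h1]
      have : signVec m (e.symm (false, t)) k * ψ (insert k T) k (A i k) = -(L * A i k) := by
        simp [signVec, hsymk, hψ]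
      rw [this]
      ring
    have hC : ∀ i, |G i| + L * |A i k| ≤ L * D + L * D := by
      intro i
      have h1 : |G i| ≤ L * D := by
        calc |G i| ≤ ∑ j ∈ Finset.univ.erase k,
              |signVec m (e.symm (true, t)) j * ψ T j (A i j)| := by
              rw [hG]; exact Finset.abs_sum_le_sum_abs _ _
          _ = ∑ j ∈ Finset.univ.erase k, |ψ T j (A i j)| := by
              refine Finset.sum_congr rfl fun j _ => ?_
              rw [abs_mul, abs_signVec, one_mul]
          _ ≤ ∑ j ∈ Finset.univ.erase k, L * |A i j| :=
              Finset.sum_le_sum fun j _ => hψbound T j (A i j)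
          _ ≤ ∑ j, L * |A i j| :=
              Finset.sum_le_sum_of_subset_of_nonneg (Finset.erase_subset _ _)
                (fun j _ _ => by positivity)
          _ = L * ∑ j, |A i j| := by rw [Finset.mul_sum]
          _ ≤ L * D := mul_le_mul_of_nonneg_left (hD i) hL
      have h2 : L * |A i k| ≤ L * D := by
        have : |A i k| ≤ ∑ j, |A i j| :=
          Finset.single_le_sum (f := fun j => |A i j|) (fun j _ => abs_nonneg _)
            (Finset.mem_univ k)
        exact mul_le_mul_of_nonneg_left (le_trans this (hD i)) hL
      linarith
    calc (⨆ i, ∑ j, signVec m (e.symm (true, t)) j * ψ T j (A i j)) +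
          (⨆ i, ∑ j, signVec m (e.symm (false, t)) j * ψ T j (A i j))
        = (⨆ i, (G i + σ (A i k))) + (⨆ i, (G i - σ (A i k))) := by
          rw [iSup_congr c1, iSup_congr c2]
      _ ≤ (⨆ i, (G i + L * A i k)) + (⨆ i, (G i - L * A i k)) :=
          key_step G (fun i => A i k) σ L hL hlip h0 (L * D + L * D) hC
      _ = (⨆ i, ∑ j, signVec m (e.symm (true, t)) j * ψ (insert k T) j (A i j)) +
          (⨆ i, ∑ j, signVec m (e.symm (false, t)) j * ψ (insert k T) j (A i j)) := by
          rw [iSup_congr c3, iSup_congr c4]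
  have main : ∀ T : Finset (Fin m), S ∅ ≤ S T := by
    intro T
    induction T using Finset.induction_on with
    | empty => exact le_refl _
    | insert _ _ h ih => exact le_trans ih (step _ _ h)
  have := main Finset.univ
  simpa [hS, hψ] using this

/-- Rademacher contraction (with absolute values): composing the
class with an `L`-Lipschitz function `σ` vanishing at `0` at most doubles the
empirical Rademacher complexity up to the factor `L`. -/
theorem radE_contraction {X : Type*} {m : ℕ} {ι : Type*} [Nonempty ι]
    (f : ι → X → ℝ) (x : Fin m → X) (σ : ℝ → ℝ) (L : ℝ) (hL : 0 ≤ L)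
    (hlip : ∀ a b : ℝ, |σ a - σ b| ≤ L * |a - b|) (h0 : σ 0 = 0)
    (hb : ∀ ε : Fin m → ℝ,
      BddAbove (Set.range fun i : ι => |∑ j : Fin m, ε j * f i (x j)|)) :
    radE m (fun ε => (⨆ i : ι, |∑ j : Fin m, ε j * σ (f i (x j))|) / m) ≤
      2 * L * radE m (fun ε => (⨆ i : ι, |∑ j : Fin m, ε j * f i (x j)|) / m) := by
  classical
  -- a uniform bound on ∑ j, |f i (x j)|
  set B : (Fin m → Bool) → ℝ :=
    fun s => sSup (Set.range fun i : ι => |∑ j : Fin m, signVec m s j * f i (x j)|) with hBdef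
  have hB : ∀ s i, |∑ j, signVec m s j * f i (x j)| ≤ B s :=
    fun s i => le_csSup (hb (signVec m s)) ⟨i, rfl⟩
  set D : ℝ := ∑ s : Fin m → Bool, |B s| with hDdef
  have hD : ∀ i, ∑ j, |f i (x j)| ≤ D := by
    intro i
    set s0 : Fin m → Bool := fun j => decide (0 ≤ f i (x j)) with hs0
    have h1 : ∑ j, |f i (x j)| = ∑ j, signVec m s0 j * f i (x j) := by
      refine Finset.sum_congr rfl fun j _ => ?_
      by_cases h : 0 ≤ f i (x j)
      · simp [signVec, hs0, h, abs_of_nonneg h]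
      · simp [signVec, hs0, h, abs_of_neg (lt_of_not_ge h)]
    rw [h1]
    calc ∑ j, signVec m s0 j * f i (x j) ≤ |∑ j, signVec m s0 j * f i (x j)| := le_abs_self _
      _ ≤ B s0 := hB s0 i
      _ ≤ |B s0| := le_abs_self _
      _ ≤ D := Finset.single_le_sum (f := fun s => |B s|)
          (fun s _ => abs_nonneg _) (Finset.mem_univ s0)
  have hD0 : 0 ≤ D := by
    obtain ⟨i0⟩ := (inferInstance : Nonempty ι)
    exact le_trans (Finset.sum_nonneg fun j _ => abs_nonneg _) (hD i0)
  -- extended class with the zero function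
  set A' : Option ι → Fin m → ℝ := fun o j => o.elim 0 (fun i => f i (x j)) with hA'
  have hD' : ∀ o, ∑ j, |A' o j| ≤ D := by
    rintro (_ | i)
    · simpa [hA'] using hD0
    · simpa [hA'] using hD i
  -- bddAbove for the extended signed sums
  have hbd2 : ∀ s : Fin m → Bool,
      BddAbove (Set.range fun o : Option ι => ∑ j, signVec m s j * σ (A' o j)) := by
    intro s
    refine ⟨L * D, ?_⟩
    rintro _ ⟨o, rfl⟩
    show ∑ j, signVec m s j * σ (A' o j) ≤ L * D
    calc ∑ j, signVec m s j * σ (A' o j) ≤ |∑ j, signVec m s j * σ (A' o j)| := le_abs_self _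
      _ ≤ ∑ j, |signVec m s j * σ (A' o j)| := Finset.abs_sum_le_sum_abs _ _
      _ = ∑ j, |σ (A' o j)| := Finset.sum_congr rfl fun j _ => by
          rw [abs_mul, abs_signVec, one_mul]
      _ ≤ ∑ j, L * |A' o j| := Finset.sum_le_sum fun j _ => absSigma hlip h0 _
      _ = L * ∑ j, |A' o j| := by rw [Finset.mul_sum]
      _ ≤ L * D := mul_le_mul_of_nonneg_left (hD' o) hL
  have habs0 : ∀ s : Fin m → Bool, (0:ℝ) ≤ ⨆ i : ι, |∑ j, signVec m s j * f i (x j)| := by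
    intro s
    obtain ⟨i0⟩ := (inferInstance : Nonempty ι)
    exact le_trans (abs_nonneg _) (le_ciSup (hb (signVec m s)) i0)
  have hnotsign : ∀ (s : Fin m → Bool) (j : Fin m),
      signVec m (fun j => !s j) j = -signVec m s j := by
    intro s j
    rcases Bool.eq_false_or_eq_true (s j) with h | h <;> simp [signVec, h]
  -- Step 1: remove the absolute value at the price of a factor 2
  have step1 : ∀ s : Fin m → Bool,
      (⨆ i : ι, |∑ j, signVec m s j * σ (f i (x j))|) ≤
      (⨆ o : Option ι, ∑ j, signVec m s j * σ (A' o j)) +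
      (⨆ o : Option ι, ∑ j, signVec m (fun j => !s j) j * σ (A' o j)) := by
    intro s
    refine ciSup_le fun i => abs_le.2 ⟨?_, ?_⟩
    · -- lower bound
      have h1 : ∑ j, signVec m (fun j => !s j) j * σ (A' (some i) j) ≤
          ⨆ o : Option ι, ∑ j, signVec m (fun j => !s j) j * σ (A' o j) :=
        le_ciSup (hbd2 _) (some i)
      have h2 : (0:ℝ) ≤ ⨆ o : Option ι, ∑ j, signVec m s j * σ (A' o j) := by
        have := le_ciSup (hbd2 s) (none : Option ι)
        simpa [hA', h0] using this
      have h3 : ∑ j, signVec m (fun j => !s j) j * σ (A' (some i) j)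
          = -∑ j, signVec m s j * σ (f i (x j)) := by
        rw [← Finset.sum_neg_distrib]
        exact Finset.sum_congr rfl fun j _ => by rw [hnotsign]; simp [hA']
      linarith [h1, h2, h3.symm.le, h3.le]
    · have h1 : ∑ j, signVec m s j * σ (A' (some i) j) ≤
          ⨆ o : Option ι, ∑ j, signVec m s j * σ (A' o j) :=
        le_ciSup (hbd2 _) (some i)
      have h2 : (0:ℝ) ≤ ⨆ o : Option ι, ∑ j, signVec m (fun j => !s j) j * σ (A' o j) := by
        have := le_ciSup (hbd2 (fun j => !s j)) (none : Option ι)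
        simpa [hA', h0] using this
      have h3 : ∑ j, signVec m s j * σ (A' (some i) j) = ∑ j, signVec m s j * σ (f i (x j)) :=
        Finset.sum_congr rfl fun j _ => by simp [hA']
      linarith
  -- symmetry of the sign distribution
  have symm_sum :
      ∑ s : Fin m → Bool, ⨆ o : Option ι, ∑ j, signVec m (fun j => !s j) j * σ (A' o j) =
      ∑ s : Fin m → Bool, ⨆ o : Option ι, ∑ j, signVec m s j * σ (A' o j) := by
    have h := Equiv.sum_comp
      (Function.Involutive.toPerm (fun s : Fin m → Bool => fun j => !(s j))
        (fun s => by funext j; simp))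
      (fun s => ⨆ o : Option ι, ∑ j, signVec m s j * σ (A' o j))
    exact h
  -- Step 3: comparison of signed sups
  have step3 : ∀ s : Fin m → Bool,
      (⨆ o : Option ι, ∑ j, signVec m s j * (L * A' o j)) ≤
      L * ⨆ i : ι, |∑ j, signVec m s j * f i (x j)| := by
    intro s
    refine ciSup_le ?_
    rintro (_ | i)
    · simpa [hA'] using mul_nonneg hL (habs0 s)
    · have h1 : ∑ j, signVec m s j * (L * A' (some i) j)
          = L * ∑ j, signVec m s j * f i (x j) := by
        rw [Finset.mul_sum]
        exact Finset.sum_congr rfl fun j _ => by simp [hA']; ring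
      rw [h1]
      refine mul_le_mul_of_nonneg_left ?_ hL
      exact le_trans (le_abs_self _) (le_ciSup (hb (signVec m s)) i)
  -- main chain on the sums
  have main : ∑ s : Fin m → Bool, (⨆ i : ι, |∑ j, signVec m s j * σ (f i (x j))|) ≤
      2 * L * ∑ s : Fin m → Bool, (⨆ i : ι, |∑ j, signVec m s j * f i (x j)|) := by
    calc ∑ s : Fin m → Bool, (⨆ i : ι, |∑ j, signVec m s j * σ (f i (x j))|)
        ≤ ∑ s : Fin m → Bool,
            ((⨆ o : Option ι, ∑ j, signVec m s j * σ (A' o j)) +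
             (⨆ o : Option ι, ∑ j, signVec m (fun j => !s j) j * σ (A' o j))) :=
          Finset.sum_le_sum fun s _ => step1 s
      _ = 2 * ∑ s : Fin m → Bool, ⨆ o : Option ι, ∑ j, signVec m s j * σ (A' o j) := by
          rw [Finset.sum_add_distrib, symm_sum]; ring
      _ ≤ 2 * ∑ s : Fin m → Bool, ⨆ o : Option ι, ∑ j, signVec m s j * (L * A' o j) := by
          have := talagrand A' σ L hL hlip h0 D hD'
          linarith
      _ ≤ 2 * ∑ s : Fin m → Bool, L * (⨆ i : ι, |∑ j, signVec m s j * f i (x j)|) := by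
          have := Finset.sum_le_sum fun s (_ : s ∈ Finset.univ) => step3 s
          linarith
      _ = 2 * L * ∑ s : Fin m → Bool, (⨆ i : ι, |∑ j, signVec m s j * f i (x j)|) := by
          rw [← Finset.mul_sum]; ring
  -- conclude by dividing
  have hdiv : ∀ a b c : ℝ, a ≤ b → 0 ≤ c → a / c ≤ b / c := by
    intro a b c h hc
    rw [div_eq_mul_inv, div_eq_mul_inv]
    exact mul_le_mul_of_nonneg_right h (inv_nonneg.2 hc)
  simp only [radE]
  rw [← Finset.sum_div, ← Finset.sum_div]
  calc ((∑ s : Fin m → Bool, (⨆ i : ι, |∑ j, signVec m s j * σ (f i (x j))|)) / m) / 2 ^ m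
      ≤ ((2 * L * ∑ s : Fin m → Bool, (⨆ i : ι, |∑ j, signVec m s j * f i (x j)|)) / m) / 2 ^ m := by
        refine hdiv _ _ _ (hdiv _ _ _ main (Nat.cast_nonneg m)) (by positivity)
    _ = 2 * L * (((∑ s : Fin m → Bool, (⨆ i : ι, |∑ j, signVec m s j * f i (x j)|)) / m) / 2 ^ m) := by
        ring
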